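/- Under the hypotheses of the phase-noise averaging identity — θ_1, …, θ_N : Ω → ℝ mutually independent real random variables with E[exp(i·θ_n)] = m ∈ ℝ for all n, Θ̃(ω) the diagonal matrix with entries exp(i·θ_n(ω)), and R an N×N complex matrix — if additionally every diagonal entry of R equals 1 (R_{nn} = 1 for all n), then the entrywise expectation of Θ̃ R Θ̃ᴴ equals m²·R + (1 − m²)·I_N, where I_N is the N×N identity matrix. -/

import Mathlib

open MeasureTheory ProbabilityTheory Complex Matrix

lemma indep_integral_mul_aux
    {Ω : Type*} [MeasurableSpace Ω] {μ : Measure Ω} [IsProbabilityMeasure μ]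
    {X Y : Ω → ℝ} (h : IndepFun X Y μ) (hX : Measurable X) (hY : Measurable Y)
    (f g : ℝ → ℂ) (hf : Measurable f) (hg : Measurable g) :
    ∫ ω, f (X ω) * g (Y ω) ∂μ = (∫ ω, f (X ω) ∂μ) * ∫ ω, g (Y ω) ∂μ := by
  have hmap := (indepFun_iff_map_prod_eq_prod_map_map hX.aemeasurable hY.aemeasurable).1 h
  have hXY : Measurable fun ω => (X ω, Y ω) := hX.prodMk hY
  have h1 : ∫ ω, f (X ω) * g (Y ω) ∂μ
      = ∫ p : ℝ × ℝ, f p.1 * g p.2 ∂(μ.map fun ω => (X ω, Y ω)) := by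
    rw [integral_map hXY.aemeasurable]
    exact ((hf.comp measurable_fst).mul (hg.comp measurable_snd)).aestronglyMeasurable
  rw [h1, hmap]
  haveI : IsProbabilityMeasure (μ.map X) := Measure.isProbabilityMeasure_map hX.aemeasurable
  haveI : IsProbabilityMeasure (μ.map Y) := Measure.isProbabilityMeasure_map hY.aemeasurable
  rw [integral_prod_mul, integral_map hX.aemeasurable hf.aestronglyMeasurable,
    integral_map hY.aemeasurable hg.aestronglyMeasurable]

/-- Equation (11) of the paper: if additionally `R` has unit diagonal (as for a
correlated Rayleigh fading correlation matrix), the phase-noise–averaged matrix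
`E[Θ̃ R Θ̃ᴴ]` equals `m² R + (1 - m²) I_N`. -/
theorem phase_noise_averaged_correlation_unit_diagonal
    {Ω : Type*} [MeasurableSpace Ω] (μ : Measure Ω) [IsProbabilityMeasure μ]
    {N : ℕ} (hN : 0 < N)
    (θ : Fin N → Ω → ℝ) (hmeas : ∀ n, Measurable (θ n))
    (hindep : iIndepFun θ μ)
    (m : ℝ) (hm : ∀ n, ∫ ω, Complex.exp (Complex.I * (θ n ω : ℂ)) ∂μ = (m : ℂ))
    (R : Matrix (Fin N) (Fin N) ℂ) (hdiag : ∀ n, R n n = 1) :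
    (Matrix.of fun n n' : Fin N =>
        ∫ ω, Complex.exp (Complex.I * (θ n ω : ℂ)) * R n n' *
          Complex.exp (-(Complex.I * (θ n' ω : ℂ))) ∂μ) =
      ((m : ℂ) ^ 2) • R + ((1 : ℂ) - (m : ℂ) ^ 2) • (1 : Matrix (Fin N) (Fin N) ℂ) := by
  ext n n'
  simp only [Matrix.of_apply, Matrix.add_apply, Matrix.smul_apply, Matrix.one_apply,
    smul_eq_mul]
  by_cases hne : n = n'
  · subst hne
    have : ∀ ω, Complex.exp (Complex.I * (θ n ω : ℂ)) * R n n *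
        Complex.exp (-(Complex.I * (θ n ω : ℂ))) = 1 := by
      intro ω
      rw [hdiag n, mul_one, ← Complex.exp_add, add_neg_cancel, Complex.exp_zero]
    rw [integral_congr_ae (Filter.Eventually.of_forall this)]
    simp [hdiag n]
  · -- off-diagonal
    have hind : IndepFun (θ n) (θ n') μ := hindep.indepFun hne
    have hf : Measurable fun x : ℝ => Complex.exp (Complex.I * (x : ℂ)) := by
      measurability
    have hg : Measurable fun x : ℝ => Complex.exp (-(Complex.I * (x : ℂ))) := by
      measurability
    have key : ∫ ω, Complex.exp (Complex.I * (θ n ω : ℂ)) *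
          Complex.exp (-(Complex.I * (θ n' ω : ℂ))) ∂μ
        = (∫ ω, Complex.exp (Complex.I * (θ n ω : ℂ)) ∂μ) *
          ∫ ω, Complex.exp (-(Complex.I * (θ n' ω : ℂ))) ∂μ :=
      indep_integral_mul_aux hind (hmeas n) (hmeas n') _ _ hf hg
    have hconj : ∫ ω, Complex.exp (-(Complex.I * (θ n' ω : ℂ))) ∂μ = (m : ℂ) := by
      have h1 : ∀ ω, Complex.exp (-(Complex.I * (θ n' ω : ℂ)))
          = (starRingEnd ℂ) (Complex.exp (Complex.I * (θ n' ω : ℂ))) := by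
        intro ω
        rw [← Complex.exp_conj]
        congr 1
        simp [Complex.ext_iff]
      simp_rw [h1]
      rw [integral_conj, hm n']
      simp
    have hcomm : ∀ ω, Complex.exp (Complex.I * (θ n ω : ℂ)) * R n n' *
        Complex.exp (-(Complex.I * (θ n' ω : ℂ)))
        = R n n' * (Complex.exp (Complex.I * (θ n ω : ℂ)) *
          Complex.exp (-(Complex.I * (θ n' ω : ℂ)))) := fun ω => by ring
    simp_rw [hcomm]
    rw [integral_const_mul, key, hm n, hconj, if_neg hne]
    ring
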